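/- Let H be a hermitian n×n complex matrix whose spectrum is the disjoint union σ_in ∪ σ_out, with |λ − κ| ≥ g for all λ ∈ σ_in and κ ∈ σ_out, where g > 0. Let α > 0 and let a : σ_in → ℝ satisfy 0 < a_λ ≤ 1 for all λ ∈ σ_in and Σ_{λ ∈ σ_in} a_λ e^{−(κ'−λ)²/(4α)} = 1 for every κ' ∈ σ_in. Define 𝒫 := Σ_{λ ∈ σ_in} a_λ · (Σ_{κ ∈ spectrum(H)} e^{−(κ−λ)²/(4α)} Q_κ(H)) and P := Σ_{λ ∈ σ_in} Q_λ(H). Then ‖𝒫 − P‖ ≤ |σ_in| · e^{−g²/(4α)}. -/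

import Mathlib

open scoped Matrix.Norms.L2Operator
set_option maxHeartbeats 1000000

open scoped InnerProductSpace

-- Bessel-type inequality for an orthogonal family of subspaces
lemma aux_bessel {E : Type*} [NormedAddCommGroup E] [InnerProductSpace ℂ E]
    {ι : Type*} (V : ι → Submodule ℂ E) [∀ i, Submodule.HasOrthogonalProjection (V i)]
    (hV : OrthogonalFamily ℂ (fun i => (V i : Submodule ℂ E)) (fun i => (V i).subtypeₗᵢ))
    (s : Finset ι) (v : E) :
    ∑ i ∈ s, ‖(Submodule.orthogonalProjectionOnto (V i) v : E)‖ ^ 2 ≤ ‖v‖ ^ 2 := by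
  classical
  set w : E := ∑ i ∈ s, ((Submodule.orthogonalProjectionOnto (V i) v : E)) with hw_def
  have hw : ‖w‖ ^ 2 = ∑ i ∈ s, ‖(Submodule.orthogonalProjectionOnto (V i) v : E)‖ ^ 2 := by
    simpa [hw_def] using hV.norm_sum (fun i => Submodule.orthogonalProjectionOnto (V i) v) s
  have hterm : ∀ i, ⟪((Submodule.orthogonalProjectionOnto (V i) v : E)), v⟫_ℂ
      = (‖(Submodule.orthogonalProjectionOnto (V i) v : E)‖ : ℂ) ^ 2 := by
    intro i
    have h0 : ⟪v - (Submodule.orthogonalProjectionOnto (V i) v : E), (Submodule.orthogonalProjectionOnto (V i) v : E)⟫_ℂ = 0 :=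
      Submodule.starProjection_inner_eq_zero v _ (Submodule.orthogonalProjectionOnto (V i) v).2
    have h1 : ⟪((Submodule.orthogonalProjectionOnto (V i) v : E)), v - (Submodule.orthogonalProjectionOnto (V i) v : E)⟫_ℂ = 0 := by
      rw [inner_eq_zero_symm]; exact h0
    have h2 := inner_sub_right (𝕜 := ℂ) ((Submodule.orthogonalProjectionOnto (V i) v : E)) v
      ((Submodule.orthogonalProjectionOnto (V i) v : E))
    rw [h1] at h2
    have h3 : ⟪((Submodule.orthogonalProjectionOnto (V i) v : E)), v⟫_ℂ
        = ⟪((Submodule.orthogonalProjectionOnto (V i) v : E)), ((Submodule.orthogonalProjectionOnto (V i) v : E))⟫_ℂ := by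
      linear_combination -h2
    rw [h3, inner_self_eq_norm_sq_to_K]
    norm_num
  have hinner : ⟪w, v⟫_ℂ = (‖w‖ ^ 2 : ℝ) := by
    rw [hw_def, sum_inner]
    simp_rw [hterm]
    rw [hw]
    push_cast
    ring
  have hre : ‖w‖ ^ 2 ≤ ‖w‖ * ‖v‖ := by
    have h4 : ‖⟪w, v⟫_ℂ‖ ≤ ‖w‖ * ‖v‖ := norm_inner_le_norm w v
    rw [hinner] at h4
    calc ‖w‖ ^ 2 ≤ |‖w‖ ^ 2| := le_abs_self _
    _ = ‖((‖w‖ ^ 2 : ℝ) : ℂ)‖ := by rw [Complex.norm_real, Real.norm_eq_abs]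
    _ ≤ ‖w‖ * ‖v‖ := h4
  nlinarith [norm_nonneg w, norm_nonneg v, hw]

lemma aux_norm_sum_proj {E : Type*} [NormedAddCommGroup E] [InnerProductSpace ℂ E]
    {ι : Type*} (V : ι → Submodule ℂ E) [∀ i, Submodule.HasOrthogonalProjection (V i)]
    (hV : OrthogonalFamily ℂ (fun i => (V i : Submodule ℂ E)) (fun i => (V i).subtypeₗᵢ))
    (s : Finset ι) (c : ι → ℝ) (M : ℝ) (hM0 : 0 ≤ M) (hM : ∀ i ∈ s, |c i| ≤ M) (v : E) :
    ‖∑ i ∈ s, (c i : ℂ) • (Submodule.orthogonalProjectionOnto (V i) v : E)‖ ≤ M * ‖v‖ := by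
  classical
  have hnorm : ‖∑ i ∈ s, (c i : ℂ) • (Submodule.orthogonalProjectionOnto (V i) v : E)‖ ^ 2
      = ∑ i ∈ s, (c i) ^ 2 * ‖(Submodule.orthogonalProjectionOnto (V i) v : E)‖ ^ 2 := by
    have := hV.norm_sum (fun i => (c i : ℂ) • Submodule.orthogonalProjectionOnto (V i) v) s
    simp only [Submodule.coe_subtypeₗᵢ, Submodule.subtype_apply] at this
    rw [show (∑ i ∈ s, (c i : ℂ) • ((Submodule.orthogonalProjectionOnto (V i) v : E))) =
        ∑ i ∈ s, (((c i : ℂ) • (Submodule.orthogonalProjectionOnto (V i) v) : V i) : E) by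
      simp, this]
    refine Finset.sum_congr rfl fun i _ => ?_
    rw [norm_smul]
    simp [mul_pow, sq_abs]
  have hb := aux_bessel V hV s v
  have hsum_le : ∑ i ∈ s, (c i) ^ 2 * ‖(Submodule.orthogonalProjectionOnto (V i) v : E)‖ ^ 2
      ≤ M ^ 2 * ‖v‖ ^ 2 := by
    calc ∑ i ∈ s, (c i) ^ 2 * ‖(Submodule.orthogonalProjectionOnto (V i) v : E)‖ ^ 2
        ≤ ∑ i ∈ s, M ^ 2 * ‖(Submodule.orthogonalProjectionOnto (V i) v : E)‖ ^ 2 := by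
          apply Finset.sum_le_sum
          intro i hi
          have : (c i) ^ 2 ≤ M ^ 2 := by
            have := hM i hi
            nlinarith [abs_nonneg (c i), sq_abs (c i)]
          nlinarith [sq_nonneg ‖(Submodule.orthogonalProjectionOnto (V i) v : E)‖]
      _ = M ^ 2 * ∑ i ∈ s, ‖(Submodule.orthogonalProjectionOnto (V i) v : E)‖ ^ 2 := by
          rw [Finset.mul_sum]
      _ ≤ M ^ 2 * ‖v‖ ^ 2 := by nlinarith
  nlinarith [norm_nonneg (∑ i ∈ s, (c i : ℂ) • (Submodule.orthogonalProjectionOnto (V i) v : E)),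
    norm_nonneg v, mul_nonneg hM0 (norm_nonneg v)]

lemma aux_main {E : Type*} [NormedAddCommGroup E] [InnerProductSpace ℂ E]
    [FiniteDimensional ℂ E]
    (T : E →ₗ[ℂ] E) (hT : T.IsSymmetric) (S : Finset ℝ) (c : ℝ → ℝ) (M : ℝ)
    (hM0 : 0 ≤ M) (hc : ∀ κ ∈ S, |c κ| ≤ M) (v : E) :
    ‖(∑ κ ∈ S, c κ • ((Module.End.eigenspace T (κ : ℂ)).subtype ∘ₗ
        (Submodule.orthogonalProjectionOnto (Module.End.eigenspace T (κ : ℂ))).toLinearMap)) v‖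
      ≤ M * ‖v‖ := by
  classical
  set V : ℝ → Submodule ℂ E := fun κ => Module.End.eigenspace T (κ : ℂ) with hV_def
  have hfam : OrthogonalFamily ℂ (fun κ : ℝ => ↥(V κ)) (fun κ => (V κ).subtypeₗᵢ) :=
    OrthogonalFamily.comp hT.orthogonalFamily_eigenspaces Complex.ofReal_injective
  have happ : (∑ κ ∈ S, c κ • ((V κ).subtype ∘ₗ
        (Submodule.orthogonalProjectionOnto (V κ)).toLinearMap)) v
      = ∑ κ ∈ S, ((c κ : ℂ)) • (Submodule.orthogonalProjectionOnto (V κ) v : E) := by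
    simp only [LinearMap.sum_apply, LinearMap.smul_apply, LinearMap.comp_apply,
      Submodule.subtype_apply, ContinuousLinearMap.coe_coe]
    refine Finset.sum_congr rfl fun κ _ => ?_
    rw [← algebraMap_smul ℂ (c κ) ((Submodule.orthogonalProjectionOnto (V κ) v : E))]
    rfl
  rw [happ]
  exact aux_norm_sum_proj V hfam S c M hM0 hc v


/-- The orthogonal projection (as a matrix) onto the eigenspace of `H` for the (real)
eigenvalue `κ`; it is `0` when `κ` is not an eigenvalue of `H`. -/
noncomputable def eigProj {n : Type*} [Fintype n] [DecidableEq n]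
    (H : Matrix n n ℂ) (κ : ℝ) : Matrix n n ℂ :=
  Matrix.toEuclideanLin.symm
    ((Module.End.eigenspace (Matrix.toEuclideanLin H) (κ : ℂ)).subtype ∘ₗ
      (Submodule.orthogonalProjectionOnto (Module.End.eigenspace (Matrix.toEuclideanLin H) (κ : ℂ))).toLinearMap)

/-- For a hermitian matrix whose spectrum splits into a sector `σ_in` and a remainder `σ_out`
separated by a gap `g`, the Gaussian combination `𝒫 = Σ_{λ∈σ_in} a_λ 𝒫_λ` (with interpolation
coefficients `a_λ`) approximates the sector projection `P` with error `|σ_in| e^{-g²/(4α)}`. -/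
theorem gaussian_approximation_of_sector_projection
    {n : Type*} [Fintype n] [DecidableEq n]
    (H : Matrix n n ℂ) (hH : H.IsHermitian)
    (σin σout : Finset ℝ) (hdisj : Disjoint σin σout)
    (hspec : ∀ κ : ℝ,
      Module.End.HasEigenvalue (Matrix.toEuclideanLin H) (κ : ℂ) ↔ κ ∈ σin ∪ σout)
    (g : ℝ) (hg : 0 < g)
    (hgap : ∀ lam ∈ σin, ∀ κ ∈ σout, g ≤ |lam - κ|)
    (α : ℝ) (hα : 0 < α)
    (a : ℝ → ℝ) (ha_pos : ∀ lam ∈ σin, 0 < a lam) (ha_le : ∀ lam ∈ σin, a lam ≤ 1)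
    (ha_interp : ∀ κ' ∈ σin,
      ∑ lam ∈ σin, a lam * Real.exp (-(κ' - lam) ^ 2 / (4 * α)) = 1) :
    ‖(∑ lam ∈ σin, a lam •
          ∑ᶠ κ : ℝ, Real.exp (-(κ - lam) ^ 2 / (4 * α)) • eigProj H κ) -
        ∑ lam ∈ σin, eigProj H lam‖ ≤
      (σin.card : ℝ) * Real.exp (-g ^ 2 / (4 * α)) := by
  classical
  set S : Finset ℝ := σin ∪ σout with hS
  set M : ℝ := (σin.card : ℝ) * Real.exp (-g ^ 2 / (4 * α)) with hM_def
  have hM0 : 0 ≤ M := by positivity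
  -- eigProj vanishes off the spectrum
  have hQ0 : ∀ κ : ℝ, κ ∉ S → eigProj H κ = 0 := by
    intro κ hκ
    have h1 : Module.End.eigenspace (Matrix.toEuclideanLin H) (κ : ℂ) = ⊥ := by
      by_contra h
      exact hκ ((hspec κ).mp h)
    unfold eigProj
    have h2 : (Module.End.eigenspace (Matrix.toEuclideanLin H) (κ : ℂ)).subtype ∘ₗ
        (Submodule.orthogonalProjectionOnto (Module.End.eigenspace (Matrix.toEuclideanLin H) (κ : ℂ))).toLinearMap
          = 0 := by
      apply LinearMap.ext
      intro v
      simp only [LinearMap.comp_apply, LinearMap.zero_apply, Submodule.subtype_apply,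
        ContinuousLinearMap.coe_coe]
      exact (Submodule.mem_bot ℂ).mp (h1.le (Submodule.orthogonalProjectionOnto _ v).2)
    rw [h2, map_zero]
  -- replace the finsums by finite sums over S
  have hfin : ∀ lam : ℝ, (∑ᶠ κ : ℝ, Real.exp (-(κ - lam) ^ 2 / (4 * α)) • eigProj H κ)
      = ∑ κ ∈ S, Real.exp (-(κ - lam) ^ 2 / (4 * α)) • eigProj H κ := by
    intro lam
    apply finsum_eq_sum_of_support_subset
    intro κ hκ
    simp only [Function.mem_support] at hκ
    by_contra hκS
    exact hκ (by rw [hQ0 κ hκS, smul_zero])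
  set c : ℝ → ℝ := fun κ =>
    (∑ lam ∈ σin, a lam * Real.exp (-(κ - lam) ^ 2 / (4 * α))) -
      (if κ ∈ σin then 1 else 0) with hc_def
  -- rewrite the difference
  have hrw : (∑ lam ∈ σin, a lam •
          ∑ᶠ κ : ℝ, Real.exp (-(κ - lam) ^ 2 / (4 * α)) • eigProj H κ) -
        ∑ lam ∈ σin, eigProj H lam = ∑ κ ∈ S, c κ • eigProj H κ := by
    have h1 : (∑ lam ∈ σin, a lam •
          ∑ᶠ κ : ℝ, Real.exp (-(κ - lam) ^ 2 / (4 * α)) • eigProj H κ)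
        = ∑ κ ∈ S, (∑ lam ∈ σin, a lam * Real.exp (-(κ - lam) ^ 2 / (4 * α))) • eigProj H κ := by
      simp_rw [hfin, Finset.smul_sum, smul_smul]
      rw [Finset.sum_comm]
      simp_rw [Finset.sum_smul]
    have h2 : (∑ lam ∈ σin, eigProj H lam)
        = ∑ κ ∈ S, (if κ ∈ σin then (1:ℝ) else 0) • eigProj H κ := by
      rw [Finset.sum_congr rfl (fun κ _ => show (if κ ∈ σin then (1:ℝ) else 0) • eigProj H κ
          = if κ ∈ σin then eigProj H κ else 0 by split <;> simp)]
      rw [Finset.sum_ite_mem, Finset.union_inter_cancel_left]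
    rw [h1, h2, ← Finset.sum_sub_distrib]
    exact Finset.sum_congr rfl fun κ _ => by rw [hc_def, sub_smul]
  rw [hrw]
  -- bound on the coefficients
  have hc_bound : ∀ κ ∈ S, |c κ| ≤ M := by
    intro κ hκ
    rw [hS, Finset.mem_union] at hκ
    rcases hκ with hκ | hκ
    · have : c κ = 0 := by
        rw [hc_def]
        simp only [if_pos hκ]
        rw [ha_interp κ hκ]
        ring
      rw [this]; simpa using hM0
    · have hκn : κ ∉ σin := fun h => (Finset.disjoint_left.mp hdisj h) hκ
      have hsum_nonneg : 0 ≤ ∑ lam ∈ σin, a lam * Real.exp (-(κ - lam) ^ 2 / (4 * α)) :=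
        Finset.sum_nonneg fun lam hlam =>
          mul_nonneg (ha_pos lam hlam).le (Real.exp_nonneg _)
      have hsum_le : ∑ lam ∈ σin, a lam * Real.exp (-(κ - lam) ^ 2 / (4 * α)) ≤ M := by
        calc ∑ lam ∈ σin, a lam * Real.exp (-(κ - lam) ^ 2 / (4 * α))
            ≤ ∑ _lam ∈ σin, Real.exp (-g ^ 2 / (4 * α)) := by
              apply Finset.sum_le_sum
              intro lam hlam
              have hgl := hgap lam hlam κ hκ
              have hexp : Real.exp (-(κ - lam) ^ 2 / (4 * α)) ≤ Real.exp (-g ^ 2 / (4 * α)) := by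
                apply Real.exp_le_exp.mpr
                have : g ^ 2 ≤ (κ - lam) ^ 2 := by
                  have h1 : g ≤ |lam - κ| := hgl
                  have h2 : |lam - κ| ^ 2 = (κ - lam) ^ 2 := by
                    rw [sq_abs]; ring
                  nlinarith [abs_nonneg (lam - κ)]
                have h4α : 0 < 4 * α := by linarith
                rw [div_le_div_iff₀ h4α h4α]
                nlinarith
              calc a lam * Real.exp (-(κ - lam) ^ 2 / (4 * α))
                  ≤ 1 * Real.exp (-g ^ 2 / (4 * α)) := by
                    apply mul_le_mul (ha_le lam hlam) hexp (Real.exp_nonneg _) zero_le_one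
                _ = Real.exp (-g ^ 2 / (4 * α)) := one_mul _
          _ = (σin.card : ℝ) * Real.exp (-g ^ 2 / (4 * α)) := by
              rw [Finset.sum_const, nsmul_eq_mul]
      rw [hc_def]
      simp only [if_neg hκn, sub_zero]
      rw [abs_of_nonneg hsum_nonneg]
      exact hsum_le
  -- now the operator norm estimate
  set V : ℝ → Submodule ℂ (EuclideanSpace ℂ n) :=
    fun κ => Module.End.eigenspace (Matrix.toEuclideanLin H) (κ : ℂ) with hV_def
  have hmat : (∑ κ ∈ S, c κ • eigProj H κ)
      = Matrix.toEuclideanLin.symm (∑ κ ∈ S, c κ •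
          ((V κ).subtype ∘ₗ (Submodule.orthogonalProjectionOnto (V κ)).toLinearMap)) := by
    rw [map_sum]
    exact Finset.sum_congr rfl fun κ _ => (Matrix.toEuclideanLin.symm.toLinearMap.map_smul_of_tower (c κ) _).symm
  rw [hmat, Matrix.l2_opNorm_def]
  simp only [LinearEquiv.trans_apply, LinearEquiv.apply_symm_apply]
  apply ContinuousLinearMap.opNorm_le_bound _ hM0
  intro v
  exact aux_main (Matrix.toEuclideanLin H)
    (Matrix.isHermitian_iff_isSymmetric.mp hH) S c M hM0 hc_bound v
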